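/- Let V be a finite vertex set, let G be a tree on V (a connected acyclic simple graph), and let (X_v)_{v∈V} be random variables on a finite probability space, each taking values in a finite type. Assume the global Markov property along paths: for every pair of distinct vertices u, w and every vertex m ≠ u, w lying on the unique path in G between u and w, the variables X_u and X_w are conditionally independent given X_m. Then for every tree T′ on the same vertex set V, the total mutual information over the edges of G is at least that over the edges of T′: Σ_{{u,v} ∈ E(G)} I(X_u ; X_v) ≥ Σ_{{u,v} ∈ E(T′)} I(X_u ; X_v). In other words, the true tree G is a maximum-weight spanning tree for the mutual-information edge weights. -/

import Mathlib

open scoped Classical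

/-- Probability of an event `p` under the pmf `w` on a finite sample space. -/
noncomputable def pr {Ω : Type*} [Fintype Ω] (w : Ω → ℝ) (p : Ω → Prop) : ℝ :=
  ∑ ω : Ω, if p ω then w ω else 0

/-- Mutual information `I(X;Y)` (terms with zero joint probability vanish since `0 * log _ = 0`). -/
noncomputable def mutualInfo {Ω A B : Type*} [Fintype Ω] [Fintype A] [Fintype B]
    (w : Ω → ℝ) (X : Ω → A) (Y : Ω → B) : ℝ :=
  ∑ a : A, ∑ b : B,
    pr w (fun ω => X ω = a ∧ Y ω = b) *
      Real.log (pr w (fun ω => X ω = a ∧ Y ω = b) /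
        (pr w (fun ω => X ω = a) * pr w (fun ω => Y ω = b)))

/-- Conditional mutual information `I(X;Y∣Z)` (zero-probability terms vanish). -/
noncomputable def condMutualInfo {Ω A B C : Type*} [Fintype Ω] [Fintype A] [Fintype B] [Fintype C]
    (w : Ω → ℝ) (X : Ω → A) (Y : Ω → B) (Z : Ω → C) : ℝ :=
  ∑ a : A, ∑ b : B, ∑ c : C,
    pr w (fun ω => X ω = a ∧ Y ω = b ∧ Z ω = c) *
      Real.log (pr w (fun ω => Z ω = c) * pr w (fun ω => X ω = a ∧ Y ω = b ∧ Z ω = c) /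
        (pr w (fun ω => X ω = a ∧ Z ω = c) * pr w (fun ω => Y ω = b ∧ Z ω = c)))

/-- `X` and `Y` are conditionally independent given `Z`. -/
def CondIndep {Ω A B C : Type*} [Fintype Ω] [Fintype A] [Fintype B] [Fintype C]
    (w : Ω → ℝ) (X : Ω → A) (Y : Ω → B) (Z : Ω → C) : Prop :=
  ∀ (a : A) (b : B) (c : C),
    pr w (fun ω => X ω = a ∧ Y ω = b ∧ Z ω = c) * pr w (fun ω => Z ω = c) =
      pr w (fun ω => X ω = a ∧ Z ω = c) * pr w (fun ω => Y ω = b ∧ Z ω = c)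

theorem mutualInfo_symm {Ω A B : Type*} [Fintype Ω] [Fintype A] [Fintype B]
    (w : Ω → ℝ) (X : Ω → A) (Y : Ω → B) :
    mutualInfo w X Y = mutualInfo w Y X := by
  unfold mutualInfo
  rw [Finset.sum_comm]
  refine Finset.sum_congr rfl fun b _ => Finset.sum_congr rfl fun a _ => ?_
  have h1 : (fun ω => X ω = a ∧ Y ω = b) = (fun ω => Y ω = b ∧ X ω = a) :=
    funext fun ω => propext and_comm
  rw [h1, mul_comm (pr w fun ω => X ω = a)]

/-- The mutual-information weight of an (unordered) edge. -/
noncomputable def edgeMI {V Ω : Type*} [Fintype Ω] (w : Ω → ℝ)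
    (A : V → Type*) [∀ v, Fintype (A v)] (X : ∀ v, Ω → A v) (e : Sym2 V) : ℝ :=
  Sym2.lift ⟨fun u v => mutualInfo w (X u) (X v),
    fun u v => mutualInfo_symm w (X u) (X v)⟩ e

section PRL
variable {Ω : Type*} [Fintype Ω] (w : Ω → ℝ)

lemma pr_congr {p q : Ω → Prop} (h : ∀ ω, p ω ↔ q ω) : pr w p = pr w q := by
  unfold pr
  exact Finset.sum_congr rfl fun ω _ => by rw [if_congr (h ω) rfl rfl]

lemma pr_nonneg (hw0 : ∀ ω, 0 ≤ w ω) (p : Ω → Prop) : 0 ≤ pr w p :=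
  Finset.sum_nonneg fun ω _ => by by_cases h : p ω <;> simp [h, hw0 ω]

lemma pr_mono (hw0 : ∀ ω, 0 ≤ w ω) {p q : Ω → Prop} (h : ∀ ω, p ω → q ω) :
    pr w p ≤ pr w q := by
  apply Finset.sum_le_sum
  intro ω _
  by_cases hp : p ω
  · simp [hp, h ω hp]
  · by_cases hq : q ω <;> simp [hp, hq, hw0 ω]

lemma pr_fiber {B : Type*} [Fintype B] (Y : Ω → B) (p : Ω → Prop) :
    pr w p = ∑ b : B, pr w (fun ω => p ω ∧ Y ω = b) := by
  unfold pr
  rw [Finset.sum_comm]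
  refine Finset.sum_congr rfl fun ω _ => ?_
  by_cases hp : p ω <;> simp [hp]

lemma pr_true (hw1 : ∑ ω : Ω, w ω = 1) : pr w (fun _ => True) = 1 := by
  simpa [pr] using hw1

end PRL

lemma gibbs_aux {ι : Type*} (s : Finset ι) (p q : ι → ℝ)
    (hp : ∀ i ∈ s, 0 ≤ p i) (hq : ∀ i ∈ s, 0 ≤ q i)
    (hpq : ∀ i ∈ s, 0 < p i → 0 < q i) :
    ∑ i ∈ s, (p i - q i) ≤ ∑ i ∈ s, p i * Real.log (p i / q i) := by
  apply Finset.sum_le_sum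
  intro i hi
  rcases (hp i hi).lt_or_eq with hpi | hpi
  · have hqi := hpq i hi hpi
    have h := Real.log_le_sub_one_of_pos (show 0 < q i / p i from div_pos hqi hpi)
    have hlog : Real.log (p i / q i) = - Real.log (q i / p i) := by
      rw [← Real.log_inv, inv_div]
    have h2 : 1 - q i / p i ≤ Real.log (p i / q i) := by rw [hlog]; linarith
    have h3 : p i * (1 - q i / p i) ≤ p i * Real.log (p i / q i) :=
      mul_le_mul_of_nonneg_left h2 hpi.le
    have h4 : p i * (1 - q i / p i) = p i - q i := by field_simp
    linarith
  · have := hq i hi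
    rw [← hpi]
    simp
    linarith

lemma sub_le_mul_log (p q : ℝ) (hp : 0 ≤ p) (hq : 0 ≤ q) (hpq : 0 < p → 0 < q) :
    p - q ≤ p * Real.log (p / q) := by
  rcases hp.lt_or_eq with hpi | hpi
  · have hqi := hpq hpi
    have h := Real.log_le_sub_one_of_pos (show 0 < q / p from div_pos hqi hpi)
    have hlog : Real.log (p / q) = - Real.log (q / p) := by
      rw [← Real.log_inv, inv_div]
    have h2 : 1 - q / p ≤ Real.log (p / q) := by rw [hlog]; linarith
    have h3 : p * (1 - q / p) ≤ p * Real.log (p / q) :=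
      mul_le_mul_of_nonneg_left h2 hpi.le
    have h4 : p * (1 - q / p) = p - q := by field_simp
    linarith
  · rw [← hpi]
    simp
    linarith

lemma dpi_arith {A B C : Type*} [Fintype A] [Fintype B] [Fintype C]
    (P3 : A → B → C → ℝ) (pab : A → B → ℝ) (pac : A → C → ℝ) (pbc : B → C → ℝ)
    (pa : A → ℝ) (pb : B → ℝ) (pc : C → ℝ)
    (hP3 : ∀ a b c, 0 ≤ P3 a b c)
    (h1 : ∀ a c, pac a c = ∑ b : B, P3 a b c)
    (h2 : ∀ a b, pab a b = ∑ c : C, P3 a b c)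
    (h3 : ∀ b, pb b = ∑ a : A, pab a b)
    (h4 : ∀ b, pb b = ∑ c : C, pbc b c)
    (h5 : ∑ b : B, pb b = 1)
    (h6 : ∀ b c, pbc b c = ∑ a : A, P3 a b c)
    (h7 : ∀ a, pa a = ∑ b : B, pab a b)
    (h8 : ∀ c, pc c = ∑ b : B, pbc b c)
    (hCI : ∀ a b c, P3 a b c * pc c = pac a c * pbc b c) :
    ∑ a : A, ∑ b : B, pab a b * Real.log (pab a b / (pa a * pb b)) ≤
      ∑ a : A, ∑ c : C, pac a c * Real.log (pac a c / (pa a * pc c)) := by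
  have hpabnn : ∀ a b, 0 ≤ pab a b := fun a b => by
    rw [h2]; exact Finset.sum_nonneg fun c _ => hP3 a b c
  have hpbcnn : ∀ b c, 0 ≤ pbc b c := fun b c => by
    rw [h6]; exact Finset.sum_nonneg fun a _ => hP3 a b c
  have hpbnn : ∀ b, 0 ≤ pb b := fun b => by
    rw [h3]; exact Finset.sum_nonneg fun a _ => hpabnn a b
  have hposab : ∀ a b c, 0 < P3 a b c → 0 < pab a b := fun a b c h => by
    have : P3 a b c ≤ pab a b := by
      rw [h2]; exact Finset.single_le_sum (fun c _ => hP3 a b c) (Finset.mem_univ c)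
    linarith
  have hposac : ∀ a b c, 0 < P3 a b c → 0 < pac a c := fun a b c h => by
    have : P3 a b c ≤ pac a c := by
      rw [h1]; exact Finset.single_le_sum (fun b _ => hP3 a b c) (Finset.mem_univ b)
    linarith
  have hposbc : ∀ a b c, 0 < P3 a b c → 0 < pbc b c := fun a b c h => by
    have : P3 a b c ≤ pbc b c := by
      rw [h6]; exact Finset.single_le_sum (fun a _ => hP3 a b c) (Finset.mem_univ a)
    linarith
  have hposa : ∀ a b c, 0 < P3 a b c → 0 < pa a := fun a b c h => by
    have h' := hposab a b c h
    have : pab a b ≤ pa a := by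
      rw [h7]; exact Finset.single_le_sum (fun b _ => hpabnn a b) (Finset.mem_univ b)
    linarith
  have hposb : ∀ a b c, 0 < P3 a b c → 0 < pb b := fun a b c h => by
    have h' := hposab a b c h
    have : pab a b ≤ pb b := by
      rw [h3]; exact Finset.single_le_sum (fun a _ => hpabnn a b) (Finset.mem_univ a)
    linarith
  have hposc : ∀ a b c, 0 < P3 a b c → 0 < pc c := fun a b c h => by
    have h' := hposbc a b c h
    have : pbc b c ≤ pc c := by
      rw [h8]; exact Finset.single_le_sum (fun b _ => hpbcnn b c) (Finset.mem_univ b)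
    linarith
  set q : A → B → C → ℝ := fun a b c => pab a b * pbc b c / pb b with hqdef
  have hqv : ∀ a b c, q a b c = pab a b * pbc b c / pb b := fun _ _ _ => rfl
  have hqnn : ∀ a b c, 0 ≤ q a b c := fun a b c =>
    div_nonneg (mul_nonneg (hpabnn a b) (hpbcnn b c)) (hpbnn b)
  have hRHS : ∑ a : A, ∑ c : C, pac a c * Real.log (pac a c / (pa a * pc c)) =
      ∑ a : A, ∑ b : B, ∑ c : C, P3 a b c * Real.log (pac a c / (pa a * pc c)) := by
    refine Finset.sum_congr rfl fun a _ => ?_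
    rw [Finset.sum_comm]
    refine Finset.sum_congr rfl fun c _ => ?_
    rw [h1, Finset.sum_mul]
  have hLHS : ∑ a : A, ∑ b : B, pab a b * Real.log (pab a b / (pa a * pb b)) =
      ∑ a : A, ∑ b : B, ∑ c : C, P3 a b c * Real.log (pab a b / (pa a * pb b)) := by
    refine Finset.sum_congr rfl fun a _ => Finset.sum_congr rfl fun b _ => ?_
    rw [h2, Finset.sum_mul]
  rw [hRHS, hLHS]
  have key : ∀ a b c,
      P3 a b c * Real.log (pac a c / (pa a * pc c)) -
        P3 a b c * Real.log (pab a b / (pa a * pb b)) =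
      P3 a b c * Real.log (P3 a b c / q a b c) := by
    intro a b c
    rcases (hP3 a b c).lt_or_eq with hpos | hzero
    · have hab := hposab a b c hpos
      have hac := hposac a b c hpos
      have hbc := hposbc a b c hpos
      have ha := hposa a b c hpos
      have hb := hposb a b c hpos
      have hc := hposc a b c hpos
      have e1 : Real.log (P3 a b c) + Real.log (pc c) =
          Real.log (pac a c) + Real.log (pbc b c) := by
        rw [← Real.log_mul hpos.ne' hc.ne', ← Real.log_mul hac.ne' hbc.ne', hCI a b c]
      have hqpos : 0 < q a b c := by
        rw [hqv]; exact div_pos (mul_pos hab hbc) hb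
      rw [Real.log_div hac.ne' (mul_pos ha hc).ne', Real.log_div hab.ne' (mul_pos ha hb).ne',
        Real.log_div hpos.ne' hqpos.ne', Real.log_mul ha.ne' hc.ne',
        Real.log_mul ha.ne' hb.ne', hqv,
        Real.log_div (mul_pos hab hbc).ne' hb.ne', Real.log_mul hab.ne' hbc.ne']
      have e2 := congrArg (fun t => P3 a b c * t) e1
      simp only [mul_add] at e2
      ring_nf
      ring_nf at e2
      linarith [e2]
    · rw [← hzero]; ring
  have hdiff : ∑ a : A, ∑ b : B, ∑ c : C, P3 a b c * Real.log (pac a c / (pa a * pc c)) -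
      ∑ a : A, ∑ b : B, ∑ c : C, P3 a b c * Real.log (pab a b / (pa a * pb b)) =
      ∑ a : A, ∑ b : B, ∑ c : C, P3 a b c * Real.log (P3 a b c / q a b c) := by
    rw [← Finset.sum_sub_distrib]
    refine Finset.sum_congr rfl fun a _ => ?_
    rw [← Finset.sum_sub_distrib]
    refine Finset.sum_congr rfl fun b _ => ?_
    rw [← Finset.sum_sub_distrib]
    exact Finset.sum_congr rfl fun c _ => key a b c
  have hgibbs : ∑ a : A, ∑ b : B, ∑ c : C, (P3 a b c - q a b c) ≤
      ∑ a : A, ∑ b : B, ∑ c : C, P3 a b c * Real.log (P3 a b c / q a b c) := by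
    refine Finset.sum_le_sum fun a _ => Finset.sum_le_sum fun b _ =>
      Finset.sum_le_sum fun c _ => ?_
    refine sub_le_mul_log _ _ (hP3 a b c) (hqnn a b c) fun h => ?_
    rw [hqv]
    exact div_pos (mul_pos (hposab a b c h) (hposbc a b c h)) (hposb a b c h)
  have hsumP : ∑ a : A, ∑ b : B, ∑ c : C, P3 a b c = 1 := by
    rw [← h5, Finset.sum_comm]
    refine Finset.sum_congr rfl fun b _ => ?_
    rw [h3]
    exact Finset.sum_congr rfl fun a _ => (h2 a b).symm
  have hsumq : ∑ a : A, ∑ b : B, ∑ c : C, q a b c ≤ 1 := by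
    rw [Finset.sum_comm]
    have hb' : ∀ b, ∑ a : A, ∑ c : C, q a b c = pb b * pb b / pb b := by
      intro b
      have : ∀ a, ∑ c : C, q a b c = pab a b * pb b / pb b := by
        intro a
        simp only [hqv]
        rw [← Finset.sum_div, ← Finset.mul_sum, ← h4]
      rw [Finset.sum_congr rfl fun a _ => this a, ← Finset.sum_div, ← Finset.sum_mul, ← h3]
    rw [Finset.sum_congr rfl fun b _ => hb' b]
    calc ∑ b : B, pb b * pb b / pb b ≤ ∑ b : B, pb b := by
          refine Finset.sum_le_sum fun b _ => ?_
          rcases eq_or_ne (pb b) 0 with h | h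
          · simp [h]
          · rw [mul_div_assoc, div_self h, mul_one]
      _ = 1 := h5
  have hsplit : ∑ a : A, ∑ b : B, ∑ c : C, (P3 a b c - q a b c) =
      (∑ a : A, ∑ b : B, ∑ c : C, P3 a b c) - ∑ a : A, ∑ b : B, ∑ c : C, q a b c := by
    simp [Finset.sum_sub_distrib]
  linarith

theorem mutualInfo_le_of_condIndep {Ω A B C : Type*}
    [Fintype Ω] [Fintype A] [Fintype B] [Fintype C]
    (w : Ω → ℝ) (hw0 : ∀ ω, 0 ≤ w ω) (hw1 : ∑ ω : Ω, w ω = 1)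
    (X : Ω → A) (Y : Ω → B) (Z : Ω → C) (h : CondIndep w X Y Z) :
    mutualInfo w X Y ≤ mutualInfo w X Z := by
  unfold mutualInfo
  refine dpi_arith (fun a b c => pr w (fun ω => X ω = a ∧ Y ω = b ∧ Z ω = c))
    (fun a b => pr w (fun ω => X ω = a ∧ Y ω = b))
    (fun a c => pr w (fun ω => X ω = a ∧ Z ω = c))
    (fun b c => pr w (fun ω => Y ω = b ∧ Z ω = c))
    (fun a => pr w (fun ω => X ω = a)) (fun b => pr w (fun ω => Y ω = b))
    (fun c => pr w (fun ω => Z ω = c))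
    (fun a b c => pr_nonneg w hw0 _) ?_ ?_ ?_ ?_ ?_ ?_ ?_ ?_ h
  · intro a c
    beta_reduce
    rw [pr_fiber w Y (fun ω => X ω = a ∧ Z ω = c)]
    exact Finset.sum_congr rfl fun b _ => pr_congr w fun ω => by tauto
  · intro a b
    beta_reduce
    rw [pr_fiber w Z (fun ω => X ω = a ∧ Y ω = b)]
    exact Finset.sum_congr rfl fun c _ => pr_congr w fun ω => by tauto
  · intro b
    beta_reduce
    rw [pr_fiber w X (fun ω => Y ω = b)]
    exact Finset.sum_congr rfl fun a _ => pr_congr w fun ω => by tauto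
  · intro b
    beta_reduce
    rw [pr_fiber w Z (fun ω => Y ω = b)]
  · beta_reduce
    rw [← pr_true w hw1, pr_fiber w Y (fun _ => True)]
    exact Finset.sum_congr rfl fun b _ => pr_congr w fun ω => by tauto
  · intro b c
    beta_reduce
    rw [pr_fiber w X (fun ω => Y ω = b ∧ Z ω = c)]
    exact Finset.sum_congr rfl fun a _ => pr_congr w fun ω => by tauto
  · intro a
    beta_reduce
    rw [pr_fiber w Y (fun ω => X ω = a)]
  · intro c
    beta_reduce
    rw [pr_fiber w Y (fun ω => Z ω = c)]
    exact Finset.sum_congr rfl fun b _ => pr_congr w fun ω => by tauto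

lemma condIndep_symm {Ω A B C : Type*} [Fintype Ω] [Fintype A] [Fintype B] [Fintype C]
    (w : Ω → ℝ) {X : Ω → A} {Y : Ω → B} {Z : Ω → C}
    (h : CondIndep w X Y Z) : CondIndep w Y X Z := by
  intro b a c
  have h' := h a b c
  rw [pr_congr w (show ∀ ω, (Y ω = b ∧ X ω = a ∧ Z ω = c) ↔ (X ω = a ∧ Y ω = b ∧ Z ω = c)
      from fun ω => by tauto)]
  linarith

lemma prop_along_walk {V : Type*} {T : SimpleGraph V} (P : V → Prop)
    (hstep : ∀ a b, T.Adj a b → P a → P b) :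
    ∀ {a b : V}, T.Walk a b → P a → P b := by
  intro a b W
  induction W with
  | nil => exact id
  | cons h _ ih => exact fun hp => ih (hstep _ _ h hp)

/-- In any walk from a vertex satisfying `R` to one not satisfying it, some dart crosses. -/
lemma exists_crossing_dart {V : Type*} {H : SimpleGraph V} {u v : V} (p : H.Walk u v)
    (R : V → Prop) (hu : R u) (hv : ¬ R v) :
    ∃ d ∈ p.darts, R d.fst ∧ ¬ R d.snd := by
  induction p with
  | nil => exact absurd hu hv
  | @cons a b c hadj q ih =>
    by_cases hb : R b
    · obtain ⟨d, hd, hdR⟩ := ih hb hv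
      exact ⟨d, List.mem_cons_of_mem _ hd, hdR⟩
    · exact ⟨⟨(a, b), hadj⟩, List.mem_cons_self, hu, hb⟩

section MIPath
variable {V Ω : Type*} [Fintype V] [DecidableEq V] [Fintype Ω]
    (w : Ω → ℝ)
    (A : V → Type*) [∀ v, Fintype (A v)] (X : ∀ v, Ω → A v)
    {G : SimpleGraph V}

/-- MI between endpoints of a path is at most MI across any dart of the path. -/
lemma mutualInfo_le_dart
    (hw0 : ∀ ω, 0 ≤ w ω) (hw1 : ∑ ω : Ω, w ω = 1)
    (hMarkov : ∀ u w' m : V, u ≠ w' → m ≠ u → m ≠ w' →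
      ∀ p : G.Walk u w', p.IsPath → m ∈ p.support →
        CondIndep w (X u) (X w') (X m))
    {u v : V} (p : G.Walk u v) (hp : p.IsPath) (d : G.Dart) (hd : d ∈ p.darts) :
    mutualInfo w (X u) (X v) ≤ mutualInfo w (X d.fst) (X d.snd) := by
  have huv : u ≠ v := by
    rintro rfl
    rw [SimpleGraph.Walk.isPath_iff_eq_nil] at hp
    subst hp
    simp at hd
  have hysup : d.snd ∈ p.support := SimpleGraph.Walk.dart_snd_mem_support_of_mem_darts p hd
  have hxsup : d.fst ∈ p.support := SimpleGraph.Walk.dart_fst_mem_support_of_mem_darts p hd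
  have hyne_u : d.snd ≠ u := by
    intro h
    have htail : d.snd ∈ p.support.tail := by
      rw [← SimpleGraph.Walk.map_snd_darts]
      exact List.mem_map_of_mem hd
    have hnd := hp.support_nodup
    rw [p.support_eq_cons] at hnd
    exact (List.nodup_cons.mp hnd).1 (h ▸ htail)
  have hxne_v : d.fst ≠ v := by
    intro h
    have hnd := hp.support_nodup
    rw [← SimpleGraph.Walk.map_fst_darts_append] at hnd
    have hdisj := (List.nodup_append'.mp hnd).2.2
    have hmem : d.fst ∈ p.darts.map (·.fst) := List.mem_map_of_mem hd
    exact hdisj hmem (by simp [h])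
  have hxy : d.fst ≠ d.snd := d.adj.ne
  by_cases hx : d.fst = u
  · by_cases hy : d.snd = v
    · rw [hx, hy]
    · -- one step: condition on d.snd
      have hci := hMarkov u v d.snd huv hyne_u hy p hp hysup
      have := mutualInfo_le_of_condIndep w hw0 hw1 (X u) (X v) (X d.snd) hci
      rw [hx]
      exact this
  · by_cases hy : d.snd = v
    · have hci := hMarkov u v d.fst huv hx hxne_v p hp hxsup
      have hci' := condIndep_symm w hci
      calc mutualInfo w (X u) (X v) = mutualInfo w (X v) (X u) :=
            mutualInfo_symm w (X u) (X v)
        _ ≤ mutualInfo w (X v) (X d.fst) :=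
            mutualInfo_le_of_condIndep w hw0 hw1 (X v) (X u) (X d.fst) hci'
        _ = mutualInfo w (X d.fst) (X v) := mutualInfo_symm w (X v) (X d.fst)
        _ = mutualInfo w (X d.fst) (X d.snd) := by rw [hy]
    · -- two steps
      have step1 : mutualInfo w (X u) (X v) ≤ mutualInfo w (X u) (X d.snd) :=
        mutualInfo_le_of_condIndep w hw0 hw1 _ _ _
          (hMarkov u v d.snd huv hyne_u hy p hp hysup)
      -- d lies in the takeUntil part
      set q := p.takeUntil d.snd hysup with hq
      have hdq : d ∈ q.darts := by
        have hsplit := p.take_spec hysup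
        have : d ∈ q.darts ∨ d ∈ (p.dropUntil d.snd hysup).darts := by
          rw [← List.mem_append, ← SimpleGraph.Walk.darts_append, hsplit]
          exact hd
        rcases this with h | h
        · exact h
        · exfalso
          have htail : d.snd ∈ (p.dropUntil d.snd hysup).support.tail := by
            rw [← SimpleGraph.Walk.map_snd_darts]
            exact List.mem_map_of_mem h
          have hnd := (hp.dropUntil hysup).support_nodup
          rw [(p.dropUntil d.snd hysup).support_eq_cons] at hnd
          exact (List.nodup_cons.mp hnd).1 htail
      have hxq : d.fst ∈ q.support := SimpleGraph.Walk.dart_fst_mem_support_of_mem_darts q hdq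
      have step2 : mutualInfo w (X u) (X d.snd) ≤ mutualInfo w (X d.fst) (X d.snd) := by
        have hci := hMarkov u d.snd d.fst (Ne.symm hyne_u) hx hxy q (hp.takeUntil hysup) hxq
        have hci' := condIndep_symm w hci
        calc mutualInfo w (X u) (X d.snd) = mutualInfo w (X d.snd) (X u) :=
              mutualInfo_symm w (X u) (X d.snd)
          _ ≤ mutualInfo w (X d.snd) (X d.fst) :=
              mutualInfo_le_of_condIndep w hw0 hw1 (X d.snd) (X u) (X d.fst) hci'
          _ = mutualInfo w (X d.fst) (X d.snd) := mutualInfo_symm w (X d.snd) (X d.fst)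
      exact le_trans step1 step2
end MIPath


section Main
variable {V Ω : Type*} [Fintype V] [DecidableEq V] [Fintype Ω]

theorem main_aux
    (w : Ω → ℝ) (hw0 : ∀ ω, 0 ≤ w ω) (hw1 : ∑ ω : Ω, w ω = 1)
    (A : V → Type*) [∀ v, Fintype (A v)] (X : ∀ v, Ω → A v)
    (G : SimpleGraph V) [DecidableRel G.Adj]
    (hGconn : G.Connected) (hGacyc : G.IsAcyclic)
    (hMarkov : ∀ u w' m : V, u ≠ w' → m ≠ u → m ≠ w' →
      ∀ p : G.Walk u w', p.IsPath → m ∈ p.support →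
        CondIndep w (X u) (X w') (X m)) :
    ∀ n (T' : SimpleGraph V) (_ : DecidableRel T'.Adj),
      T'.Connected → T'.IsAcyclic → (T'.edgeFinset \ G.edgeFinset).card = n →
      ∑ e ∈ T'.edgeFinset, edgeMI w A X e ≤ ∑ e ∈ G.edgeFinset, edgeMI w A X e := by
  intro n
  induction n with
  | zero =>
    intro T' _ hT'conn hT'acyc hcard
    have hsub : T'.edgeFinset ⊆ G.edgeFinset := by
      intro e he
      by_contra hne
      have : e ∈ T'.edgeFinset \ G.edgeFinset := Finset.mem_sdiff.mpr ⟨he, hne⟩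
      rw [Finset.card_eq_zero] at hcard
      simp [hcard] at this
    have hG : G.edgeFinset.card + 1 = Fintype.card V :=
      SimpleGraph.IsTree.card_edgeFinset ⟨hGconn, hGacyc⟩
    have hT : T'.edgeFinset.card + 1 = Fintype.card V :=
      SimpleGraph.IsTree.card_edgeFinset ⟨hT'conn, hT'acyc⟩
    have heq : T'.edgeFinset = G.edgeFinset :=
      Finset.eq_of_subset_of_card_le hsub (by omega)
    rw [heq]
  | succ n ih =>
    intro T' instT' hT'conn hT'acyc hcard
    -- pick an edge of T' not in G
    have hne : (T'.edgeFinset \ G.edgeFinset).Nonempty := by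
      rw [← Finset.card_pos, hcard]; omega
    obtain ⟨e', he'⟩ := hne
    obtain ⟨he'T, he'G⟩ := Finset.mem_sdiff.mp he'
    induction e' using Sym2.ind with
    | _ u v =>
    have hadj : T'.Adj u v := SimpleGraph.mem_edgeFinset.mp he'T
    have huv : u ≠ v := hadj.ne
    -- a path in G from u to v
    obtain ⟨p0⟩ := hGconn.preconnected u v
    obtain ⟨p, hp⟩ := p0.toPath
    -- delete the edge from T'
    set D := T'.deleteEdges {s(u, v)} with hD
    have hDnr : ¬ D.Reachable u v := by
      have hb := SimpleGraph.isAcyclic_iff_forall_adj_isBridge.mp hT'acyc hadj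
      exact SimpleGraph.isBridge_iff.mp hb
    have hDle : D ≤ T' := SimpleGraph.deleteEdges_le _
    -- crossing dart on the G-path
    obtain ⟨d, hd, hRx, hRy⟩ :=
      exists_crossing_dart p (D.Reachable u) (SimpleGraph.Reachable.refl u) hDnr
    have hxyG : G.Adj d.fst d.snd := d.adj
    have hxyne : d.fst ≠ d.snd := hxyG.ne
    have hfG : s(d.fst, d.snd) ∈ G.edgeFinset := SimpleGraph.mem_edgeFinset.mpr hxyG
    have hfe' : s(d.fst, d.snd) ≠ s(u, v) := by
      intro h
      exact he'G (h ▸ hfG)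
    have hfT' : s(d.fst, d.snd) ∉ T'.edgeFinset := by
      intro h
      have hT'adj : T'.Adj d.fst d.snd := SimpleGraph.mem_edgeFinset.mp h
      have hDadj : D.Adj d.fst d.snd := by
        rw [hD, SimpleGraph.deleteEdges_adj]
        exact ⟨hT'adj, by simpa using hfe'⟩
      exact hRy (hRx.trans hDadj.reachable)
    -- dichotomy: every vertex is D-reachable from u or from v
    have step : ∀ a b : V, T'.Adj a b → (D.Reachable u a ∨ D.Reachable v a) →
        (D.Reachable u b ∨ D.Reachable v b) := by
      intro a b hab hr
      by_cases he : s(a, b) = s(u, v)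
      · rcases Sym2.eq_iff.mp he with ⟨rfl, rfl⟩ | ⟨rfl, rfl⟩
        · exact Or.inr (SimpleGraph.Reachable.refl _)
        · exact Or.inl (SimpleGraph.Reachable.refl _)
      · have hDab : D.Adj a b := by
          rw [hD, SimpleGraph.deleteEdges_adj]
          exact ⟨hab, by simpa using he⟩
        rcases hr with h | h
        · exact Or.inl (h.trans hDab.reachable)
        · exact Or.inr (h.trans hDab.reachable)
    have hsplit : ∀ a : V, D.Reachable u a ∨ D.Reachable v a := by
      intro a
      obtain ⟨W⟩ := hT'conn.preconnected u a
      exact prop_along_walk (fun z => D.Reachable u z ∨ D.Reachable v z) step W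
        (Or.inl (SimpleGraph.Reachable.refl u))
    -- the swapped tree
    set T'' := D ⊔ SimpleGraph.fromEdgeSet {s(d.fst, d.snd)} with hT''
    letI instT'' : DecidableRel T''.Adj := Classical.decRel _
    letI iT'' : Fintype T''.edgeSet := SimpleGraph.fintypeEdgeSet T''
    have hDleT'' : D ≤ T'' := le_sup_left
    have hxyT'' : T''.Adj d.fst d.snd := by
      rw [hT'', SimpleGraph.sup_adj]
      exact Or.inr (by simp [hxyne])
    have hyv : D.Reachable v d.snd := (hsplit d.snd).resolve_left hRy
    have huvT'' : T''.Reachable u v :=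
      ((hRx.mono hDleT'').trans hxyT''.reachable).trans ((hyv.mono hDleT'').symm)
    have hall : ∀ a, T''.Reachable u a := fun a =>
      (hsplit a).elim (fun h => h.mono hDleT'')
        (fun h => huvT''.trans (h.mono hDleT''))
    have hT''conn : T''.Connected := by
      haveI : Nonempty V := ⟨u⟩
      exact ⟨fun a b => ((hall a).symm.trans (hall b))⟩
    -- edge sets
    have hT''edge : T''.edgeFinset = insert (s(d.fst, d.snd)) (T'.edgeFinset.erase (s(u, v))) := by
      ext e
      simp only [SimpleGraph.mem_edgeFinset, hT'', SimpleGraph.edgeSet_sup, hD,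
        SimpleGraph.edgeSet_deleteEdges, SimpleGraph.edgeSet_fromEdgeSet,
        Set.mem_union, Set.mem_diff, Set.mem_singleton_iff, Set.mem_setOf_eq,
        Finset.mem_insert, Finset.mem_erase]
      constructor
      · rintro (⟨h1, h2⟩ | ⟨h1, _⟩)
        · exact Or.inr ⟨h2, h1⟩
        · exact Or.inl h1
      · rintro (rfl | ⟨h1, h2⟩)
        · exact Or.inr ⟨rfl, by simpa using hxyne⟩
        · exact Or.inl ⟨h2, h1⟩
    -- acyclicity of T''
    have hT''acyc : T''.IsAcyclic := by
      intro a c hc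
      by_cases hf : s(d.fst, d.snd) ∈ c.edges
      · have hreach : (T'' \ SimpleGraph.fromEdgeSet {s(d.fst, d.snd)}).Reachable d.fst d.snd :=
          (SimpleGraph.adj_and_reachable_delete_edges_iff_exists_cycle.mpr ⟨a, c, hc, hf⟩).2
        have hle : T'' \ SimpleGraph.fromEdgeSet {s(d.fst, d.snd)} ≤ D := by
          intro a' b' hab
          rw [SimpleGraph.sdiff_adj] at hab
          obtain ⟨h1, h2⟩ := hab
          rw [hT'', SimpleGraph.sup_adj] at h1
          rcases h1 with h1 | h1
          · exact h1
          · exact absurd h1 h2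
        exact hRy (hRx.trans (hreach.mono hle))
      · have hsub : ∀ e ∈ c.edges, e ∈ T'.edgeSet := by
          intro e he
          have heT'' : e ∈ T''.edgeSet := c.edges_subset_edgeSet he
          have : e ∈ T''.edgeFinset := SimpleGraph.mem_edgeFinset.mpr heT''
          rw [hT''edge, Finset.mem_insert] at this
          rcases this with rfl | hmem
          · exact absurd he hf
          · exact SimpleGraph.mem_edgeFinset.mp (Finset.mem_erase.mp hmem).2
        exact hT'acyc (c.transfer T' hsub) (hc.transfer hsub)
    -- cardinality bookkeeping
    have hT''card : (T''.edgeFinset \ G.edgeFinset).card = n := by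
      have : T''.edgeFinset \ G.edgeFinset = (T'.edgeFinset \ G.edgeFinset).erase (s(u, v)) := by
        rw [hT''edge]
        ext e
        simp only [Finset.mem_sdiff, Finset.mem_insert, Finset.mem_erase]
        constructor
        · rintro ⟨rfl | ⟨h1, h2⟩, h3⟩
          · exact absurd hfG h3
          · exact ⟨h1, h2, h3⟩
        · rintro ⟨h1, h2, h3⟩
          exact ⟨Or.inr ⟨h1, h2⟩, h3⟩
      rw [this, Finset.card_erase_of_mem he', hcard]
      omega
    -- sums
    have hfnotin : s(d.fst, d.snd) ∉ T'.edgeFinset.erase (s(u, v)) := fun h =>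
      hfT' (Finset.mem_erase.mp h).2
    have hsum'' : ∑ e ∈ T''.edgeFinset, edgeMI w A X e =
        edgeMI w A X (s(d.fst, d.snd)) + ∑ e ∈ T'.edgeFinset.erase (s(u, v)), edgeMI w A X e := by
      rw [hT''edge, Finset.sum_insert hfnotin]
    have hsum' : ∑ e ∈ T'.edgeFinset, edgeMI w A X e =
        edgeMI w A X (s(u, v)) + ∑ e ∈ T'.edgeFinset.erase (s(u, v)), edgeMI w A X e :=
      (Finset.add_sum_erase _ _ he'T).symm
    have hMI : edgeMI w A X (s(u, v)) ≤ edgeMI w A X (s(d.fst, d.snd)) := by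
      have := mutualInfo_le_dart w A X hw0 hw1 hMarkov p hp d hd
      simpa [edgeMI] using this
    have hIH := ih T'' instT'' hT''conn hT''acyc hT''card
    calc ∑ e ∈ T'.edgeFinset, edgeMI w A X e
        = edgeMI w A X (s(u, v)) + ∑ e ∈ T'.edgeFinset.erase (s(u, v)), edgeMI w A X e := hsum'
      _ ≤ edgeMI w A X (s(d.fst, d.snd)) + ∑ e ∈ T'.edgeFinset.erase (s(u, v)), edgeMI w A X e := by
          linarith
      _ = ∑ e ∈ T''.edgeFinset, edgeMI w A X e := hsum''.symm
      _ ≤ ∑ e ∈ G.edgeFinset, edgeMI w A X e := hIH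

end Main

/-- Let `G` be a tree on a finite vertex set `V` and `(X v)` random variables
satisfying the global Markov property along paths of `G`: whenever `m` lies strictly between `u`
and `w'` on the (unique) path of `G` joining them, `X u` and `X w'` are conditionally independent
given `X m`. Then for every tree `T'` on `V`, the total mutual information over the edges of `G`
is at least that over the edges of `T'`; i.e., `G` is a maximum-weight spanning tree for the
mutual-information edge weights. -/
theorem tree_is_max_weight_spanning_tree
    {V Ω : Type*} [Fintype V] [DecidableEq V] [Fintype Ω]
    (w : Ω → ℝ) (hw0 : ∀ ω, 0 ≤ w ω) (hw1 : ∑ ω : Ω, w ω = 1)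
    (A : V → Type*) [∀ v, Fintype (A v)] (X : ∀ v, Ω → A v)
    (G : SimpleGraph V) [DecidableRel G.Adj]
    (hGconn : G.Connected) (hGacyc : G.IsAcyclic)
    (hMarkov : ∀ u w' m : V, u ≠ w' → m ≠ u → m ≠ w' →
      ∀ p : G.Walk u w', p.IsPath → m ∈ p.support →
        CondIndep w (X u) (X w') (X m))
    (T' : SimpleGraph V) [DecidableRel T'.Adj]
    (hT'conn : T'.Connected) (hT'acyc : T'.IsAcyclic) :
    ∑ e ∈ T'.edgeFinset, edgeMI w A X e ≤ ∑ e ∈ G.edgeFinset, edgeMI w A X e := by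
  exact main_aux w hw0 hw1 A X G hGconn hGacyc hMarkov _ T' _ hT'conn hT'acyc rfl
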